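/- The set of ternary quartic forms over ℝ that can be written as a sum of three squares of quadratic forms is closed in the (finite-dimensional real) coefficient space of all ternary quartic forms: if a homogeneous degree-4 polynomial f ∈ ℝ[x,y,z] is the limit (coefficientwise) of a sequence of forms f_n, each of which is a sum of three squares of homogeneous degree-2 polynomials, then f itself is a sum of three squares of homogeneous degree-2 polynomials. -/

import Mathlib

open MvPolynomial Filter

namespace Sos3Aux

/-- The exponent vector of the monomial `x_i * x_j`. -/
noncomputable def sab (i j : Fin 3) : Fin 3 →₀ ℕ := Finsupp.single i 1 + Finsupp.single j 1

lemma sab_apply (i j t : Fin 3) :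
    sab i j t = (if i = t then 1 else 0) + (if j = t then 1 else 0) := by
  simp [sab, Finsupp.single_apply]

lemma sab_comm (i j : Fin 3) : sab i j = sab j i := add_comm _ _

lemma sab_fst (i j : Fin 3) : sab i j i ≠ 0 := by simp [sab_apply]

lemma eq_of_sab_ne_zero {i j t : Fin 3} (h : sab i j t ≠ 0) : t = i ∨ t = j := by
  rw [sab_apply] at h
  by_contra hc
  push_neg at hc
  rw [if_neg (fun h' => hc.1 h'.symm), if_neg (fun h' => hc.2 h'.symm)] at h
  exact h rfl

lemma deg3 (d : Fin 3 →₀ ℕ) : d.degree = d 0 + d 1 + d 2 := by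
  rw [Finsupp.degree_apply, Finset.sum_subset (Finset.subset_univ d.support)
    (fun x _ hx => by simpa using hx), Fin.sum_univ_three]

lemma degree_sab (i j : Fin 3) : (sab i j).degree = 2 := by
  rw [deg3]
  fin_cases i <;> fin_cases j <;> simp [sab_apply]

lemma sab_eq_sab_iff {i j a b : Fin 3} :
    sab i j = sab a b ↔ (i = a ∧ j = b) ∨ (i = b ∧ j = a) := by
  constructor
  · intro h
    have hi : i = a ∨ i = b := eq_of_sab_ne_zero (h ▸ sab_fst i j)
    rcases hi with rfl | rfl
    · left
      refine ⟨rfl, ?_⟩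
      have h' : Finsupp.single i 1 + Finsupp.single j 1
          = Finsupp.single i 1 + Finsupp.single b 1 := h
      exact (Finsupp.single_left_inj one_ne_zero).mp (add_left_cancel h')
    · right
      refine ⟨rfl, ?_⟩
      rw [sab_comm a i] at h
      have h' : Finsupp.single i 1 + Finsupp.single j 1
          = Finsupp.single i 1 + Finsupp.single a 1 := h
      exact (Finsupp.single_left_inj one_ne_zero).mp (add_left_cancel h')
  · rintro (⟨rfl, rfl⟩ | ⟨rfl, rfl⟩)
    · rfl
    · exact sab_comm i j

lemma exists_sab (d : Fin 3 →₀ ℕ) (h : d.degree = 2) : ∃ i j, d = sab i j := by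
  rw [deg3] at h
  have hext : ∀ i j : Fin 3, d 0 = sab i j 0 → d 1 = sab i j 1 → d 2 = sab i j 2 →
      d = sab i j := by
    intro i j h0 h1 h2
    ext t
    fin_cases t <;> assumption
  by_cases e0 : d 0 = 2
  · exact ⟨0, 0, hext 0 0 (by simp [sab_apply]; omega) (by simp [sab_apply]; omega)
      (by simp [sab_apply]; omega)⟩
  · by_cases e1 : d 1 = 2
    · exact ⟨1, 1, hext 1 1 (by simp [sab_apply]; omega) (by simp [sab_apply]; omega)
        (by simp [sab_apply]; omega)⟩
    · by_cases e2 : d 2 = 2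
      · exact ⟨2, 2, hext 2 2 (by simp [sab_apply]; omega) (by simp [sab_apply]; omega)
          (by simp [sab_apply]; omega)⟩
      · by_cases e01 : d 0 = 1 ∧ d 1 = 1
        · exact ⟨0, 1, hext 0 1 (by simp [sab_apply]; omega) (by simp [sab_apply]; omega)
            (by simp [sab_apply]; omega)⟩
        · by_cases e02 : d 0 = 1 ∧ d 2 = 1
          · exact ⟨0, 2, hext 0 2 (by simp [sab_apply]; omega) (by simp [sab_apply]; omega)
              (by simp [sab_apply]; omega)⟩
          · exact ⟨1, 2, hext 1 2 (by simp [sab_apply]; omega) (by simp [sab_apply]; omega)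
              (by simp [sab_apply]; omega)⟩

lemma prod_pow_sab (x : Fin 3 → ℝ) (i j : Fin 3) :
    (∏ t, x t ^ sab i j t) = x i * x j := by
  fin_cases i <;> fin_cases j <;>
    simp [Fin.prod_univ_three, sab_apply] <;> ring

lemma eval_single {q : MvPolynomial (Fin 3) ℝ} (hq : q.IsHomogeneous 2) (i : Fin 3) :
    eval (fun t => if t = i then (1 : ℝ) else 0) q = coeff (sab i i) q := by
  rw [eval_eq']
  have hterm : ∀ d ∈ q.support,
      coeff d q * ∏ t, (if t = i then (1 : ℝ) else 0) ^ d t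
        = if d = sab i i then coeff d q else 0 := by
    intro d hd
    have hdeg : d.degree = 2 := by
      by_contra hne
      exact MvPolynomial.mem_support_iff.mp hd (hq.coeff_eq_zero hne)
    obtain ⟨a, b, rfl⟩ := exists_sab d hdeg
    rw [prod_pow_sab]
    by_cases ha : a = i <;> by_cases hb : b = i <;>
      simp [sab_eq_sab_iff, ha, hb]
  rw [Finset.sum_congr rfl hterm, Finset.sum_ite_eq' q.support (sab i i) (fun d => coeff d q)]
  split_ifs with h
  · rfl
  · exact (MvPolynomial.notMem_support_iff.mp h).symm

lemma eval_pair {q : MvPolynomial (Fin 3) ℝ} (hq : q.IsHomogeneous 2) {i j : Fin 3}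
    (hij : i ≠ j) :
    eval (fun t => if t = i ∨ t = j then (1 : ℝ) else 0) q
      = coeff (sab i i) q + coeff (sab j j) q + coeff (sab i j) q := by
  rw [eval_eq']
  have hterm : ∀ d ∈ q.support,
      coeff d q * ∏ t, (if t = i ∨ t = j then (1 : ℝ) else 0) ^ d t
        = (if d = sab i i then coeff d q else 0) + (if d = sab j j then coeff d q else 0)
          + (if d = sab i j then coeff d q else 0) := by
    intro d hd
    have hdeg : d.degree = 2 := by
      by_contra hne
      exact MvPolynomial.mem_support_iff.mp hd (hq.coeff_eq_zero hne)
    obtain ⟨a, b, rfl⟩ := exists_sab d hdeg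
    rw [prod_pow_sab]
    rcases em (a = i ∨ a = j) with ha | ha
    · rcases em (b = i ∨ b = j) with hb | hb
      · rw [if_pos ha, if_pos hb]
        rcases ha with rfl | rfl <;> rcases hb with rfl | rfl <;>
          simp [sab_eq_sab_iff, hij, Ne.symm hij]
      · push_neg at hb
        simp [sab_eq_sab_iff, hb.1, hb.2]
    · push_neg at ha
      simp [sab_eq_sab_iff, ha.1, ha.2]
  rw [Finset.sum_congr rfl hterm, Finset.sum_add_distrib, Finset.sum_add_distrib,
    Finset.sum_ite_eq' q.support (sab i i) (fun d => coeff d q),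
    Finset.sum_ite_eq' q.support (sab j j) (fun d => coeff d q),
    Finset.sum_ite_eq' q.support (sab i j) (fun d => coeff d q)]
  congr 1
  · congr 1
    · split_ifs with h
      · rfl
      · exact (MvPolynomial.notMem_support_iff.mp h).symm
    · split_ifs with h
      · rfl
      · exact (MvPolynomial.notMem_support_iff.mp h).symm
  · split_ifs with h
    · rfl
    · exact (MvPolynomial.notMem_support_iff.mp h).symm

lemma eval_tendsto (f : MvPolynomial (Fin 3) ℝ) (F : ℕ → MvPolynomial (Fin 3) ℝ)
    (hf4 : f.IsHomogeneous 4) (hF4 : ∀ n, (F n).IsHomogeneous 4)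
    (hlim : ∀ d : Fin 3 →₀ ℕ,
      Tendsto (fun n => coeff d (F n)) atTop (nhds (coeff d f)))
    (x : Fin 3 → ℝ) :
    Tendsto (fun n => eval x (F n)) atTop (nhds (eval x f)) := by
  classical
  set T : Finset (Fin 3 →₀ ℕ) := Finset.Iic (Finsupp.equivFunOnFinite.symm fun _ => 4) with hT
  have key : ∀ p : MvPolynomial (Fin 3) ℝ, p.IsHomogeneous 4 →
      eval x p = ∑ d ∈ T, coeff d p * ∏ t, x t ^ d t := by
    intro p hp
    rw [eval_eq']
    apply Finset.sum_subset
    · intro d hd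
      have hdeg : d.degree = 4 := by
        by_contra hne
        exact MvPolynomial.mem_support_iff.mp hd (hp.coeff_eq_zero hne)
      rw [hT, Finset.mem_Iic]
      intro t
      have := Finsupp.le_degree t d
      rw [hdeg] at this
      simpa [Finsupp.equivFunOnFinite] using this
    · intro d _ hd
      rw [MvPolynomial.notMem_support_iff.mp hd, zero_mul]
  have hrw : (fun n => eval x (F n))
      = fun n => ∑ d ∈ T, coeff d (F n) * ∏ t, x t ^ d t :=
    funext fun n => key _ (hF4 n)
  rw [hrw, key f hf4]
  exact tendsto_finset_sum _ fun d _ => (hlim d).mul_const _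

end Sos3Aux

open Sos3Aux

/-- The set of ternary quartic forms over ℝ that are sums of three squares of
quadratic forms is closed in coefficient space: a coefficientwise limit of such
forms is again such a form. -/
theorem sos3_closed
    (f : MvPolynomial (Fin 3) ℝ) (hf4 : f.IsHomogeneous 4)
    (F : ℕ → MvPolynomial (Fin 3) ℝ)
    (hF4 : ∀ n, (F n).IsHomogeneous 4)
    (hFsos : ∀ n, ∃ q₁ q₂ q₃ : MvPolynomial (Fin 3) ℝ,
      q₁.IsHomogeneous 2 ∧ q₂.IsHomogeneous 2 ∧ q₃.IsHomogeneous 2 ∧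
      F n = q₁ ^ 2 + q₂ ^ 2 + q₃ ^ 2)
    (hlim : ∀ d : Fin 3 →₀ ℕ,
      Tendsto (fun n => coeff d (F n)) atTop (nhds (coeff d f))) :
    ∃ q₁ q₂ q₃ : MvPolynomial (Fin 3) ℝ,
      q₁.IsHomogeneous 2 ∧ q₂.IsHomogeneous 2 ∧ q₃.IsHomogeneous 2 ∧
      f = q₁ ^ 2 + q₂ ^ 2 + q₃ ^ 2 := by
  classical
  choose q1 q2 q3 hq1 hq2 hq3 hsum using hFsos
  set q : Fin 3 → ℕ → MvPolynomial (Fin 3) ℝ := ![q1, q2, q3] with hqdef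
  have hqh : ∀ (k : Fin 3) (n : ℕ), (q k n).IsHomogeneous 2 := by
    intro k n
    fin_cases k
    · exact hq1 n
    · exact hq2 n
    · exact hq3 n
  have hFsum : ∀ n, F n = ∑ k, (q k n) ^ 2 := by
    intro n
    rw [hsum n, Fin.sum_univ_three]
    rfl
  -- evaluations of the q's are uniformly bounded at every point
  have hevalb : ∀ x : Fin 3 → ℝ, ∃ C : ℝ, ∀ n k, |eval x (q k n)| ≤ C := by
    intro x
    obtain ⟨C, hC⟩ := (eval_tendsto f F hf4 hF4 hlim x).bddAbove_range
    refine ⟨Real.sqrt C, fun n k => Real.abs_le_sqrt ?_⟩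
    calc eval x (q k n) ^ 2 = eval x (q k n ^ 2) := (map_pow _ _ _).symm
      _ ≤ ∑ k', eval x (q k' n ^ 2) :=
          Finset.single_le_sum (f := fun k' => eval x (q k' n ^ 2))
            (fun k' _ => by simpa [map_pow] using sq_nonneg (eval x (q k' n)))
            (Finset.mem_univ k)
      _ = eval x (F n) := by rw [hFsum n, map_sum]
      _ ≤ C := hC (Set.mem_range_self n)
  -- coefficients of the q's are uniformly bounded
  have hcoeffb : ∀ i j : Fin 3, ∃ B : ℝ, ∀ n k, |coeff (sab i j) (q k n)| ≤ B := by
    intro i j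
    rcases eq_or_ne i j with rfl | hij
    · obtain ⟨C, hC⟩ := hevalb (fun t => if t = i then (1 : ℝ) else 0)
      exact ⟨C, fun n k => by rw [← eval_single (hqh k n) i]; exact hC n k⟩
    · obtain ⟨C1, hC1⟩ := hevalb (fun t => if t = i ∨ t = j then (1 : ℝ) else 0)
      obtain ⟨C2, hC2⟩ := hevalb (fun t => if t = i then (1 : ℝ) else 0)
      obtain ⟨C3, hC3⟩ := hevalb (fun t => if t = j then (1 : ℝ) else 0)
      refine ⟨C1 + C2 + C3, fun n k => ?_⟩
      have hid := eval_pair (hqh k n) hij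
      have heq : coeff (sab i j) (q k n)
          = eval (fun t => if t = i ∨ t = j then (1 : ℝ) else 0) (q k n)
            - coeff (sab i i) (q k n) - coeff (sab j j) (q k n) := by
        rw [hid]; ring
      rw [heq, ← eval_single (hqh k n) i, ← eval_single (hqh k n) j, sub_sub]
      calc |_ - _| ≤ |eval (fun t => if t = i ∨ t = j then (1 : ℝ) else 0) (q k n)|
            + |eval (fun t => if t = i then (1 : ℝ) else 0) (q k n)
              + eval (fun t => if t = j then (1 : ℝ) else 0) (q k n)| := abs_sub _ _
        _ ≤ C1 + (C2 + C3) := by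
            refine add_le_add (hC1 n k) ((abs_add_le _ _).trans (add_le_add (hC2 n k) (hC3 n k)))
        _ = C1 + C2 + C3 := by ring
  choose B hB using hcoeffb
  -- compactness in the finite-dimensional space of coefficient data
  set γ : ℕ → Fin 3 → Fin 3 → Fin 3 → ℝ := fun n k i j => coeff (sab i j) (q k n) with hγ
  set s : Set (Fin 3 → Fin 3 → Fin 3 → ℝ) :=
    Set.pi Set.univ fun _ : Fin 3 => Set.pi Set.univ fun i => Set.pi Set.univ fun j =>
      Set.Icc (-(B i j)) (B i j) with hs
  have hscompact : IsCompact s :=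
    isCompact_univ_pi fun _ => isCompact_univ_pi fun i => isCompact_univ_pi fun j =>
      isCompact_Icc
  have hmem : ∀ n, γ n ∈ s := by
    intro n
    simp only [hs, Set.mem_pi, Set.mem_univ, true_implies, Set.mem_Icc]
    intro k i j
    have h := abs_le.mp (hB i j n k)
    exact ⟨h.1, h.2⟩
  obtain ⟨c, -, φ, hφ, hconv⟩ := hscompact.tendsto_subseq hmem
  have hcc : ∀ k i j, Tendsto (fun n => coeff (sab i j) (q k (φ n))) atTop (nhds (c k i j)) := by
    intro k i j
    exact tendsto_pi_nhds.mp (tendsto_pi_nhds.mp (tendsto_pi_nhds.mp hconv k) i) j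
  have hsymm : ∀ k i j, c k i j = c k j i := by
    intro k i j
    have h2 := hcc k j i
    simp only [sab_comm j i] at h2
    exact tendsto_nhds_unique (hcc k i j) h2
  -- the limit quadratic forms
  set Q : Fin 3 → MvPolynomial (Fin 3) ℝ := fun k =>
    ∑ i, ∑ j, monomial (sab i j) (if i = j then c k i j else c k i j / 2) with hQ
  have hQh : ∀ k, (Q k).IsHomogeneous 2 := fun k =>
    MvPolynomial.IsHomogeneous.sum _ _ _ fun i _ =>
      MvPolynomial.IsHomogeneous.sum _ _ _ fun j _ =>
        isHomogeneous_monomial _ (degree_sab i j)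
  have hQcoeff : ∀ (k : Fin 3) (a b : Fin 3), coeff (sab a b) (Q k) = c k a b := by
    intro k a b
    simp only [hQ, MvPolynomial.coeff_sum, MvPolynomial.coeff_monomial]
    fin_cases a <;> fin_cases b <;>
      simp [Fin.sum_univ_three, sab_eq_sab_iff] <;>
      linarith [hsymm k 0 1, hsymm k 0 2, hsymm k 1 2]
  have hQlim : ∀ (k : Fin 3) (d : Fin 3 →₀ ℕ),
      Tendsto (fun n => coeff d (q k (φ n))) atTop (nhds (coeff d (Q k))) := by
    intro k d
    by_cases hd : d.degree = 2
    · obtain ⟨i, j, rfl⟩ := exists_sab d hd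
      rw [hQcoeff k i j]
      exact hcc k i j
    · have h1 : ∀ n, coeff d (q k n) = 0 := fun n => (hqh k n).coeff_eq_zero hd
      have h2 : coeff d (Q k) = 0 := (hQh k).coeff_eq_zero hd
      simp only [h1, h2]
      exact tendsto_const_nhds
  have hkey : ∀ d, coeff d f = coeff d (∑ k, (Q k) ^ 2) := by
    intro d
    have h1 : Tendsto (fun n => coeff d (F (φ n))) atTop (nhds (coeff d f)) :=
      (hlim d).comp hφ.tendsto_atTop
    have h2 : Tendsto (fun n => coeff d (F (φ n))) atTop (nhds (coeff d (∑ k, (Q k) ^ 2))) := by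
      have hrew : ∀ n, coeff d (F n)
          = ∑ k, ∑ x ∈ Finset.HasAntidiagonal.antidiagonal d, coeff x.1 (q k n) * coeff x.2 (q k n) := by
        intro n
        rw [hFsum n, MvPolynomial.coeff_sum]
        exact Finset.sum_congr rfl fun k _ => by rw [sq, MvPolynomial.coeff_mul]
      have hrew2 : coeff d (∑ k, (Q k) ^ 2)
          = ∑ k, ∑ x ∈ Finset.HasAntidiagonal.antidiagonal d, coeff x.1 (Q k) * coeff x.2 (Q k) := by
        rw [MvPolynomial.coeff_sum]
        exact Finset.sum_congr rfl fun k _ => by rw [sq, MvPolynomial.coeff_mul]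
      simp only [hrew, hrew2]
      exact tendsto_finset_sum _ fun k _ =>
        tendsto_finset_sum _ fun x _ => ((hQlim k x.1).mul (hQlim k x.2))
    exact tendsto_nhds_unique h1 h2
  refine ⟨Q 0, Q 1, Q 2, hQh 0, hQh 1, hQh 2, ?_⟩
  have hfQ : f = ∑ k, (Q k) ^ 2 := MvPolynomial.ext _ _ hkey
  rw [hfQ, Fin.sum_univ_three]
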